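/- For every r > 0 and every x ∈ ℝ, the symmetric partial sums ∑_{k=−N}^{N} tanh( π(x + 2πk)/(2r) ) converge as N → ∞, and H_I(r,x) = −x/r + (π/r)·lim_{N→∞} ∑_{k=−N}^{N} tanh( π(x + 2πk)/(2r) ). -/

import Mathlib

open Real Filter MeasureTheory

/-- The annulus function `J(r,x) = (π²/(2r²)) ∑_{k ∈ ℤ} cosh(π(x+2kπ)/(2r))⁻²`. -/
noncomputable def Jfun (r x : ℝ) : ℝ :=
  (π ^ 2 / (2 * r ^ 2)) * ∑' k : ℤ, ((Real.cosh (π * (x + 2 * (k : ℝ) * π) / (2 * r))) ^ 2)⁻¹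

/-- `H_I(r,x) = ∫_0^x (J(r,y) - 1/r) dy`. -/
noncomputable def HI (r x : ℝ) : ℝ := ∫ y in (0:ℝ)..x, (Jfun r y - 1 / r)

namespace Stmt17Aux

lemma half_exp_abs_le_cosh (t : ℝ) : Real.exp |t| / 2 ≤ Real.cosh t := by
  rw [Real.cosh_eq]
  rcases abs_cases t with ⟨h, _⟩ | ⟨h, _⟩
  · rw [h]; have := (Real.exp_pos (-t)).le; linarith
  · rw [h]; have := (Real.exp_pos t).le; linarith

lemma sech_sq_le (t : ℝ) : ((Real.cosh t) ^ 2)⁻¹ ≤ 4 * Real.exp (-(2 * |t|)) := by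
  have h1 := half_exp_abs_le_cosh t
  have hp : (0:ℝ) < Real.exp |t| / 2 := by positivity
  have h2 : (Real.exp |t| / 2) ^ 2 ≤ (Real.cosh t) ^ 2 := by
    exact pow_le_pow_left₀ hp.le h1 2
  have h3 : ((Real.cosh t) ^ 2)⁻¹ ≤ ((Real.exp |t| / 2) ^ 2)⁻¹ :=
    inv_anti₀ (by positivity) h2
  have h4 : ((Real.exp |t| / 2) ^ 2)⁻¹ = 4 * Real.exp (-(2 * |t|)) := by
    have he : Real.exp |t| ^ 2 = Real.exp (2 * |t|) := by
      rw [← Real.exp_nat_mul]; norm_num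
    rw [div_pow, he, Real.exp_neg]
    have := Real.exp_pos (2 * |t|)
    field_simp
    norm_num
  linarith [h3, h4.le, h4.ge]

lemma inv_cosh_le (t : ℝ) : (Real.cosh t)⁻¹ ≤ 2 * Real.exp (-|t|) := by
  have h1 := half_exp_abs_le_cosh t
  have h3 : (Real.cosh t)⁻¹ ≤ (Real.exp |t| / 2)⁻¹ :=
    inv_anti₀ (by positivity) h1
  have h4 : (Real.exp |t| / 2)⁻¹ = 2 * Real.exp (-|t|) := by
    rw [Real.exp_neg]
    have := Real.exp_pos |t|
    field_simp
  linarith [h3, h4.le, h4.ge]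

lemma summable_exp_int {c : ℝ} (hc : 0 < c) :
    Summable fun k : ℤ => Real.exp (-(c * |(k : ℝ)|)) := by
  apply Summable.of_nat_of_neg
  · have : ∀ n : ℕ, Real.exp (-(c * |((n : ℤ) : ℝ)|)) = Real.exp ((n : ℝ) * (-c)) := by
      intro n
      congr 1
      push_cast
      rw [abs_of_nonneg (by positivity : (0:ℝ) ≤ (n:ℝ))]
      ring
    simp only [this]
    exact Real.summable_exp_nat_mul_iff.2 (by linarith)
  · have : ∀ n : ℕ, Real.exp (-(c * |((-n : ℤ) : ℝ)|)) = Real.exp ((n : ℝ) * (-c)) := by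
      intro n
      congr 1
      push_cast
      rw [abs_neg, abs_of_nonneg (by positivity : (0:ℝ) ≤ (n:ℝ))]
      ring
    simp only [this]
    exact Real.summable_exp_nat_mul_iff.2 (by linarith)

lemma tanh_sub_tanh (u v : ℝ) :
    Real.tanh u - Real.tanh v = Real.sinh (u - v) / (Real.cosh u * Real.cosh v) := by
  rw [Real.tanh_eq_sinh_div_cosh, Real.tanh_eq_sinh_div_cosh,
    div_sub_div _ _ (ne_of_gt (Real.cosh_pos u)) (ne_of_gt (Real.cosh_pos v)),
    Real.sinh_sub]

lemma hasDerivAt_tanh (t : ℝ) : HasDerivAt Real.tanh (((Real.cosh t) ^ 2)⁻¹) t := by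
  have h : HasDerivAt (fun s => Real.sinh s / Real.cosh s)
      ((Real.cosh t * Real.cosh t - Real.sinh t * Real.sinh t) / (Real.cosh t) ^ 2) t :=
    (Real.hasDerivAt_sinh t).div (Real.hasDerivAt_cosh t) (ne_of_gt (Real.cosh_pos t))
  have hfun : (fun s => Real.sinh s / Real.cosh s) = Real.tanh :=
    funext fun s => (Real.tanh_eq_sinh_div_cosh s).symm
  rw [hfun] at h
  convert h using 1
  have h1 := Real.cosh_sq_sub_sinh_sq t
  have h2 : Real.cosh t * Real.cosh t - Real.sinh t * Real.sinh t = 1 := by nlinarith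
  rw [h2, inv_eq_one_div]

/-- The summand in `Jfun`. -/
noncomputable def F (r : ℝ) (k : ℤ) (y : ℝ) : ℝ :=
  ((Real.cosh (π * (y + 2 * (k : ℝ) * π) / (2 * r))) ^ 2)⁻¹

lemma F_cont (r : ℝ) (k : ℤ) : Continuous (F r k) := by
  apply Continuous.inv₀
  · fun_prop
  · intro y
    positivity

lemma F_bound {r : ℝ} (hr : 0 < r) (k : ℤ) {y M : ℝ} (hy : |y| ≤ M) :
    F r k y ≤ (4 * Real.exp (π / r * M)) * Real.exp (-(2 * π ^ 2 / r * |(k : ℝ)|)) := by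
  have hπ := Real.pi_pos
  set t := π * (y + 2 * (k : ℝ) * π) / (2 * r) with ht
  have h1 : F r k y ≤ 4 * Real.exp (-(2 * |t|)) := sech_sq_le t
  have habs : 2 * π * |(k : ℝ)| - M ≤ |y + 2 * (k : ℝ) * π| := by
    have h2 : |(2 * (k : ℝ) * π)| ≤ |y + 2 * (k : ℝ) * π| + |y| := by
      calc |(2 * (k : ℝ) * π)| = |(y + 2 * (k : ℝ) * π) + (-y)| := by ring_nf
        _ ≤ |y + 2 * (k : ℝ) * π| + |(-y)| := abs_add_le _ _
        _ = |y + 2 * (k : ℝ) * π| + |y| := by rw [abs_neg]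
    have h3 : |(2 * (k : ℝ) * π)| = 2 * π * |(k : ℝ)| := by
      rw [abs_mul, abs_mul, abs_of_pos hπ, abs_of_nonneg (by norm_num : (0:ℝ) ≤ 2)]
      ring
    linarith
  have htabs : |t| = π / (2 * r) * |y + 2 * (k : ℝ) * π| := by
    rw [ht, show π * (y + 2 * (k : ℝ) * π) / (2 * r)
      = (π / (2 * r)) * (y + 2 * (k : ℝ) * π) by ring, abs_mul,
      abs_of_pos (by positivity : (0:ℝ) < π / (2 * r))]
  have ha : (0:ℝ) < π / (2 * r) := by positivity
  have key : -(2 * |t|) ≤ π / r * M + -(2 * π ^ 2 / r * |(k : ℝ)|) := by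
    have := mul_le_mul_of_nonneg_left habs ha.le
    rw [htabs]
    have hr' : r ≠ 0 := ne_of_gt hr
    have expand : π / (2 * r) * (2 * π * |(k : ℝ)| - M)
        = π ^ 2 / r * |(k : ℝ)| - π / (2 * r) * M := by
      field_simp
    rw [expand] at this
    have hM2 : π / (2 * r) * M ≤ π / r * M ∨ True := Or.inr trivial
    -- -(2 * (π/(2r) * |y+2kπ|)) ≤ -(2 * (π²/r |k| - π/(2r) M))
    have h5 : -(2 * (π / (2 * r) * |y + 2 * (k : ℝ) * π|))
        ≤ -(2 * (π ^ 2 / r * |(k : ℝ)| - π / (2 * r) * M)) := by linarith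
    have h6 : -(2 * (π ^ 2 / r * |(k : ℝ)| - π / (2 * r) * M))
        = π / r * M + -(2 * π ^ 2 / r * |(k : ℝ)|) := by
      field_simp
      ring
    linarith
  calc F r k y ≤ 4 * Real.exp (-(2 * |t|)) := h1
    _ ≤ 4 * Real.exp (π / r * M + -(2 * π ^ 2 / r * |(k : ℝ)|)) := by
        have := Real.exp_le_exp.2 key
        linarith
    _ = (4 * Real.exp (π / r * M)) * Real.exp (-(2 * π ^ 2 / r * |(k : ℝ)|)) := by
        rw [Real.exp_add]; ring

lemma summable_bound {r : ℝ} (hr : 0 < r) (C : ℝ) :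
    Summable fun k : ℤ => C * Real.exp (-(2 * π ^ 2 / r * |(k : ℝ)|)) := by
  have hπ := Real.pi_pos
  exact (summable_exp_int (by positivity : (0:ℝ) < 2 * π ^ 2 / r)).mul_left C

lemma contOn_tsum {r : ℝ} (hr : 0 < r) (M : ℝ) :
    ContinuousOn (fun y => ∑' k : ℤ, F r k y) (Set.Icc (-M) M) := by
  rw [continuousOn_iff_continuous_restrict]
  have := continuous_tsum (f := fun (k : ℤ) (y : Set.Icc (-M) M) => F r k y.1)
    (u := fun k : ℤ => (4 * Real.exp (π / r * M)) * Real.exp (-(2 * π ^ 2 / r * |(k : ℝ)|)))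
    (fun k => (F_cont r k).comp continuous_subtype_val)
    (summable_bound hr _)
    (by
      intro k y
      have hy : |y.1| ≤ M := by
        have := y.2
        rw [Set.mem_Icc] at this
        rw [abs_le]; exact this
      have hb := F_bound hr k hy
      have h0 : 0 ≤ F r k y.1 := by
        unfold F; positivity
      rwa [Real.norm_eq_abs, abs_of_nonneg h0])
  exact this

lemma uIcc_subset (x : ℝ) : Set.uIcc (0:ℝ) x ⊆ Set.Icc (-|x|) |x| := by
  rw [Set.uIcc]
  apply Set.Icc_subset_Icc
  · exact le_min (neg_nonpos.2 (abs_nonneg x)) (neg_abs_le x)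
  · exact max_le (abs_nonneg x) (le_abs_self x)

lemma intInt_tsum {r : ℝ} (hr : 0 < r) (x : ℝ) :
    IntervalIntegrable (fun y => ∑' k : ℤ, F r k y) volume 0 x :=
  ((contOn_tsum hr |x|).mono (uIcc_subset x)).intervalIntegrable

/-- Swap of sum and integral on `Ioc u v` when `|y| ≤ M` on it. -/
lemma swap_set {r : ℝ} (hr : 0 < r) {u v M : ℝ}
    (hM : ∀ y ∈ Set.Ioc u v, |y| ≤ M) :
    ∑' k : ℤ, ∫ y in Set.Ioc u v, F r k y = ∫ y in Set.Ioc u v, ∑' k : ℤ, F r k y := by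
  apply MeasureTheory.integral_tsum_of_summable_integral_norm
  · intro k
    exact (F_cont r k).integrableOn_Ioc
  · apply Summable.of_nonneg_of_le
      (fun k => integral_nonneg fun y => norm_nonneg _)
      (fun k => ?_)
      (((summable_bound hr (4 * Real.exp (π / r * M))).mul_left
        (volume (Set.Ioc u v)).toReal))
    have hmeas : MeasurableSet (Set.Ioc u v) := measurableSet_Ioc
    have hfin : volume (Set.Ioc u v) < ⊤ := measure_Ioc_lt_top
    calc ∫ y in Set.Ioc u v, ‖F r k y‖
        ≤ ∫ _y in Set.Ioc u v,
            ((4 * Real.exp (π / r * M)) * Real.exp (-(2 * π ^ 2 / r * |(k : ℝ)|))) := by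
          apply MeasureTheory.setIntegral_mono_on
          · exact ((F_cont r k).norm.integrableOn_Ioc)
          · exact integrableOn_const hfin.ne enorm_ne_top
          · exact hmeas
          · intro y hy
            have h0 : 0 ≤ F r k y := by unfold F; positivity
            rw [Real.norm_eq_abs, abs_of_nonneg h0]
            exact F_bound hr k (hM y hy)
      _ = (volume (Set.Ioc u v)).toReal *
            ((4 * Real.exp (π / r * M)) * Real.exp (-(2 * π ^ 2 / r * |(k : ℝ)|))) := by
          rw [MeasureTheory.setIntegral_const, smul_eq_mul]
          rfl

lemma swap {r : ℝ} (hr : 0 < r) (x : ℝ) :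
    ∫ y in (0:ℝ)..x, ∑' k : ℤ, F r k y = ∑' k : ℤ, ∫ y in (0:ℝ)..x, F r k y := by
  rcases le_total (0:ℝ) x with h | h
  · rw [intervalIntegral.integral_of_le h]
    simp only [intervalIntegral.integral_of_le h]
    refine (swap_set hr (M := |x|) ?_).symm
    intro y hy
    rw [abs_le]
    constructor
    · linarith [hy.1.le, neg_abs_le x, abs_nonneg x]
    · linarith [hy.2, le_abs_self x]
  · rw [intervalIntegral.integral_of_ge h]
    simp only [intervalIntegral.integral_of_ge h]
    rw [tsum_neg]
    congr 1
    refine (swap_set hr (M := |x|) ?_).symm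
    intro y hy
    rw [abs_le]
    constructor
    · linarith [hy.1.le, neg_abs_le x]
    · linarith [hy.2, le_abs_self x, abs_nonneg x]

lemma per_k_integral {r : ℝ} (hr : 0 < r) (x s : ℝ) :
    ∫ y in (0:ℝ)..x, ((Real.cosh (π * (y + s) / (2 * r))) ^ 2)⁻¹
      = (2 * r / π) * (Real.tanh (π * (x + s) / (2 * r)) - Real.tanh (π * s / (2 * r))) := by
  have hπ := Real.pi_pos
  have key : ∀ y : ℝ, HasDerivAt (fun z => (2 * r / π) * Real.tanh (π * (z + s) / (2 * r)))
      (((Real.cosh (π * (y + s) / (2 * r))) ^ 2)⁻¹) y := by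
    intro y
    have h1 : HasDerivAt (fun z : ℝ => π * (z + s) / (2 * r)) (π / (2 * r)) y := by
      have : (fun z : ℝ => π * (z + s) / (2 * r)) = fun z => (π / (2 * r)) * (z + s) := by
        funext z; ring
      rw [this]
      simpa using ((hasDerivAt_id y).add_const s).const_mul (π / (2 * r))
    have h2 := ((hasDerivAt_tanh (π * (y + s) / (2 * r))).comp y h1).const_mul (2 * r / π)
    refine h2.congr_deriv ?_
    have hc : π / (2 * r) * (2 * r / π) = 1 := by field_simp
    linear_combination ((Real.cosh (π * (y + s) / (2 * r))) ^ 2)⁻¹ * hc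
  rw [intervalIntegral.integral_eq_sub_of_hasDerivAt (fun y _ => key y)
    (by
      apply Continuous.intervalIntegrable
      apply Continuous.inv₀
      · fun_prop
      · intro y; positivity)]
  rw [show π * (0 + s) / (2 * r) = π * s / (2 * r) by ring]
  ring

end Stmt17Aux

open Stmt17Aux in
/-- For every `r > 0` and `x ∈ ℝ`, the symmetric partial sums
`∑_{k=-N}^N tanh(π(x+2πk)/(2r))` converge to some `L`, and
`H_I(r,x) = -x/r + (π/r) L`. -/
theorem stmt17 (r : ℝ) (hr : 0 < r) (x : ℝ) :
    ∃ L : ℝ,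
      Tendsto (fun N : ℕ =>
          ∑ k ∈ Finset.Icc (-(N : ℤ)) (N : ℤ),
            Real.tanh (π * (x + 2 * π * (k : ℝ)) / (2 * r)))
        atTop (nhds L) ∧
      HI r x = -x / r + (π / r) * L := by
  have hπ := Real.pi_pos
  have hr' : r ≠ 0 := ne_of_gt hr
  have hπ' : π ≠ 0 := ne_of_gt hπ
  set g : ℤ → ℝ := fun k =>
    Real.tanh (π * (x + 2 * π * (k : ℝ)) / (2 * r)) - Real.tanh (π * (2 * π * (k : ℝ)) / (2 * r))
    with hg
  -- summability of g
  have hgsum : Summable g := by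
    apply Summable.of_norm_bounded
      (g := fun k : ℤ => (2 * |Real.sinh (π * x / (2 * r))|) * Real.exp (-(π ^ 2 / r * |(k : ℝ)|)))
      ((summable_exp_int (by positivity : (0:ℝ) < π ^ 2 / r)).mul_left _)
    intro k
    set u := π * (x + 2 * π * (k : ℝ)) / (2 * r)
    set v := π * (2 * π * (k : ℝ)) / (2 * r) with hv
    have huv : u - v = π * x / (2 * r) := by rw [hv]; ring
    have habsv : |v| = π ^ 2 / r * |(k : ℝ)| := by
      rw [hv, show π * (2 * π * (k : ℝ)) / (2 * r) = (π ^ 2 / r) * (k : ℝ) by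
        field_simp, abs_mul, abs_of_pos (by positivity : (0:ℝ) < π ^ 2 / r)]
    have hident : g k = Real.sinh (π * x / (2 * r)) / (Real.cosh u * Real.cosh v) := by
      rw [hg]
      simp only []
      rw [tanh_sub_tanh, huv]
    rw [hident, Real.norm_eq_abs, abs_div,
      abs_of_pos (mul_pos (Real.cosh_pos u) (Real.cosh_pos v)), div_eq_mul_inv, mul_inv]
    have h1 : (Real.cosh u)⁻¹ ≤ 1 := by
      rw [inv_le_one_iff₀]
      right
      exact Real.one_le_cosh u
    have h2 : (Real.cosh v)⁻¹ ≤ 2 * Real.exp (-(π ^ 2 / r * |(k : ℝ)|)) := by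
      have := inv_cosh_le v
      rwa [habsv] at this
    calc |Real.sinh (π * x / (2 * r))| * ((Real.cosh u)⁻¹ * (Real.cosh v)⁻¹)
        ≤ |Real.sinh (π * x / (2 * r))| * (1 * (2 * Real.exp (-(π ^ 2 / r * |(k : ℝ)|)))) := by
          gcongr
      _ = (2 * |Real.sinh (π * x / (2 * r))|) * Real.exp (-(π ^ 2 / r * |(k : ℝ)|)) := by ring
  refine ⟨∑' k, g k, ?_, ?_⟩
  · -- Tendsto part
    have hIcc : Tendsto (fun N : ℕ => Finset.Icc (-(N : ℤ)) (N : ℤ)) atTop atTop := by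
      apply tendsto_atTop_finset_of_monotone
      · intro m n h
        apply Finset.Icc_subset_Icc <;> omega
      · intro k
        refine ⟨k.natAbs, Finset.mem_Icc.2 ⟨?_, ?_⟩⟩ <;> omega
    have hlim : Tendsto (fun N : ℕ => ∑ k ∈ Finset.Icc (-(N : ℤ)) (N : ℤ), g k)
        atTop (nhds (∑' k, g k)) := hgsum.hasSum.comp hIcc
    apply hlim.congr
    intro N
    have hzero : ∑ k ∈ Finset.Icc (-(N : ℤ)) (N : ℤ),
        Real.tanh (π * (2 * π * (k : ℝ)) / (2 * r)) = 0 := by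
      have hodd : ∀ k : ℤ, Real.tanh (π * (2 * π * ((-k : ℤ) : ℝ)) / (2 * r))
          = -Real.tanh (π * (2 * π * (k : ℝ)) / (2 * r)) := by
        intro k
        rw [show π * (2 * π * ((-k : ℤ) : ℝ)) / (2 * r)
          = -(π * (2 * π * (k : ℝ)) / (2 * r)) by push_cast; ring, Real.tanh_neg]
      have heq : ∑ k ∈ Finset.Icc (-(N : ℤ)) (N : ℤ),
          Real.tanh (π * (2 * π * (k : ℝ)) / (2 * r))
        = ∑ k ∈ Finset.Icc (-(N : ℤ)) (N : ℤ),
          -Real.tanh (π * (2 * π * (k : ℝ)) / (2 * r)) := by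
        apply Finset.sum_equiv (Equiv.neg ℤ)
        · intro i
          simp only [Finset.mem_Icc, Equiv.neg_apply]
          omega
        · intro i _
          rw [Equiv.neg_apply, hodd i, neg_neg]
      rw [Finset.sum_neg_distrib] at heq
      linarith
    rw [hg]
    simp only []
    rw [Finset.sum_sub_distrib, hzero, sub_zero]
  · -- HI identity
    have hint_tsum := intInt_tsum hr x
    have hJ : Jfun r = fun y => (π ^ 2 / (2 * r ^ 2)) * ∑' k : ℤ, F r k y := by
      funext y
      rfl
    have hJint : IntervalIntegrable (Jfun r) volume 0 x := by
      rw [hJ]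
      exact hint_tsum.const_mul _
    have hsplit : HI r x = (∫ y in (0:ℝ)..x, Jfun r y) - x * (1 / r) := by
      rw [HI, intervalIntegral.integral_sub hJint (intervalIntegrable_const),
        intervalIntegral.integral_const, smul_eq_mul, sub_zero]
    have hswap : ∫ y in (0:ℝ)..x, Jfun r y
        = (π ^ 2 / (2 * r ^ 2)) * ∑' k : ℤ, ∫ y in (0:ℝ)..x, F r k y := by
      rw [hJ, intervalIntegral.integral_const_mul, swap hr x]
    have hperk : ∀ k : ℤ, ∫ y in (0:ℝ)..x, F r k y = (2 * r / π) * g k := by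
      intro k
      have h1 := per_k_integral hr x (2 * (k : ℝ) * π)
      have h2 : (fun y => F r k y)
          = fun y => ((Real.cosh (π * (y + 2 * (k : ℝ) * π) / (2 * r))) ^ 2)⁻¹ := rfl
      rw [h2, h1, hg]
      have e1 : π * (x + 2 * (k : ℝ) * π) / (2 * r) = π * (x + 2 * π * (k : ℝ)) / (2 * r) := by
        ring
      have e2 : π * (2 * (k : ℝ) * π) / (2 * r) = π * (2 * π * (k : ℝ)) / (2 * r) := by
        ring
      rw [e1, e2]
    have htsum : ∑' k : ℤ, ∫ y in (0:ℝ)..x, F r k y = (2 * r / π) * ∑' k, g k := by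
      simp only [hperk]
      exact tsum_mul_left
    rw [hsplit, hswap, htsum]
    have hc : π ^ 2 / (2 * r ^ 2) * ((2 * r / π) * ∑' k, g k) = (π / r) * ∑' k, g k := by
      field_simp
    rw [hc]
    ring
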